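/- Fix σ² > 0 and a nonnegative integer t. Starting from φ(0, σ²) = 1/2 and applying the recursion φ(μ + σ², σ²) = e^{-μ-σ²/2}(1 - φ(μ, σ²)) repeatedly, the value φ(tσ², σ²) is determined exactly; in particular φ(σ², σ²) = e^{-σ²/2}/2 and φ(2σ², σ²) = e^{-3σ²/2}(1 - e^{-σ²/2}/2). -/

import Mathlib

open MeasureTheory ProbabilityTheory Real

/-- The logistic-normal integral `φ(μ, σ²) = E[1/(1+e^W)]` for `W ~ N(μ, σ²)`. -/
noncomputable def logisticNormal (m : ℝ) (s2 : NNReal) : ℝ :=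
  ∫ w, (1 + Real.exp w)⁻¹ ∂(gaussianReal m s2)

/-- The sequence of exact values obtained from Pirjol's recursion starting at
`φ(0, σ²) = 1/2`. -/
noncomputable def pirjolSeq (s2 : ℝ) : ℕ → ℝ
  | 0 => 1 / 2
  | t + 1 => Real.exp (-(t * s2) - s2 / 2) * (1 - pirjolSeq s2 t)

lemma integral_gaussianReal_eq (m : ℝ) {v : NNReal} (hv : v ≠ 0) (g : ℝ → ℝ) :
    ∫ x, g x ∂(gaussianReal m v) = ∫ x, gaussianPDFReal m v x * g x := by
  rw [gaussianReal_of_var_ne_zero _ hv]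
  have h : (gaussianPDF m v) = fun x => ((gaussianPDFReal m v x).toNNReal : ENNReal) := by
    ext x; simp [gaussianPDF, ENNReal.ofReal]
  rw [h, integral_withDensity_eq_integral_smul
    ((measurable_gaussianPDFReal m v).real_toNNReal) g]
  congr 1; ext x
  simp [NNReal.smul_def, Real.coe_toNNReal _ (gaussianPDFReal_nonneg m v x)]

lemma gaussianPDFReal_shift (m : ℝ) {v : NNReal} (hv : v ≠ 0) (x : ℝ) :
    gaussianPDFReal (m + (v : ℝ)) v x =
      Real.exp (x - m - v / 2) * gaussianPDFReal m v x := by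
  have hv' : (v : ℝ) ≠ 0 := by exact_mod_cast hv
  simp only [gaussianPDFReal]
  have harg : -(x - (m + (v:ℝ))) ^ 2 / (2 * (v:ℝ))
      = -(x - m) ^ 2 / (2 * (v:ℝ)) + (x - m - (v:ℝ) / 2) := by
    field_simp
    ring
  rw [harg, Real.exp_add]
  ring

lemma logistic_mem (x : ℝ) : (1 + Real.exp x)⁻¹ ∈ Set.Icc (0:ℝ) 1 := by
  have h : (0:ℝ) < 1 + Real.exp x := by positivity
  constructor
  · positivity
  · rw [inv_le_one_iff₀]; right; linarith [Real.exp_pos x]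

lemma integrable_logistic (m : ℝ) (v : NNReal) :
    Integrable (fun x => (1 + Real.exp x)⁻¹) (gaussianReal m v) := by
  refine (integrable_const (1:ℝ)).mono' ?_ ?_
  · exact (Measurable.inv (by measurability)).aestronglyMeasurable
  · filter_upwards with x
    rw [Real.norm_eq_abs, abs_of_nonneg (logistic_mem x).1]
    exact (logistic_mem x).2

lemma logisticNormal_rec (m : ℝ) {v : NNReal} (hv : v ≠ 0) :
    logisticNormal (m + (v : ℝ)) v =
      Real.exp (-m - (v : ℝ) / 2) * (1 - logisticNormal m v) := by
  have key : (fun x => gaussianPDFReal (m + (v:ℝ)) v x * (1 + Real.exp x)⁻¹)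
      = fun x => Real.exp (-m - (v:ℝ)/2) *
          (gaussianPDFReal m v x * (1 - (1 + Real.exp x)⁻¹)) := by
    funext x
    have h : (0:ℝ) < 1 + Real.exp x := by positivity
    have h2 : (1 : ℝ) - (1 + Real.exp x)⁻¹ = Real.exp x * (1 + Real.exp x)⁻¹ := by
      field_simp
      ring
    rw [gaussianPDFReal_shift m hv x, h2,
      show x - m - (v:ℝ)/2 = (-m - (v:ℝ)/2) + x by ring, Real.exp_add]
    ring
  rw [logisticNormal, integral_gaussianReal_eq _ hv, key, integral_const_mul,
    ← integral_gaussianReal_eq _ hv]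
  congr 1
  rw [integral_sub (integrable_const 1) (integrable_logistic m v), integral_const]
  simp [logisticNormal]

lemma logisticNormal_zero (v : NNReal) (_hv : v ≠ 0) :
    logisticNormal 0 v = 1 / 2 := by
  have hmap : (gaussianReal 0 v).map (fun x => (-1 : ℝ) * x) = gaussianReal 0 v := by
    rw [gaussianReal_map_const_mul (-1)]
    norm_num
  have h : logisticNormal 0 v = ∫ x, (1 + Real.exp (-1 * x))⁻¹ ∂(gaussianReal 0 v) := by
    rw [logisticNormal]
    conv_lhs => rw [← hmap]
    rw [integral_map (f := fun w => (1 + Real.exp w)⁻¹) (by fun_prop) ((Measurable.inv (by measurability)).aestronglyMeasurable)]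
  have h2 : ∀ x : ℝ, (1 + Real.exp (-1 * x))⁻¹ = 1 - (1 + Real.exp x)⁻¹ := by
    intro x
    have hx : (0:ℝ) < 1 + Real.exp x := by positivity
    rw [neg_one_mul, Real.exp_neg]
    have he := Real.exp_pos x
    field_simp
    ring
  simp_rw [h2] at h
  rw [integral_sub (integrable_const 1) (integrable_logistic 0 v), integral_const] at h
  simp only [measure_univ, ENNReal.toReal_one, smul_eq_mul, one_mul, probReal_univ] at h
  have : logisticNormal 0 v = 1 - logisticNormal 0 v := h
  linarith

/-- Starting from `φ(0, σ²) = 1/2`, the recursion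
`φ(μ + σ², σ²) = e^{-μ-σ²/2}(1 - φ(μ, σ²))` determines `φ(tσ², σ²)` exactly
for every nonnegative integer `t`; in particular `φ(σ², σ²) = e^{-σ²/2}/2`
and `φ(2σ², σ²) = e^{-3σ²/2}(1 - e^{-σ²/2}/2)`. -/
theorem logisticNormal_grid (s2 : NNReal) (hs2 : 0 < s2) :
    (∀ t : ℕ, logisticNormal (t * (s2 : ℝ)) s2 = pirjolSeq (s2 : ℝ) t) ∧
      logisticNormal (s2 : ℝ) s2 = Real.exp (-(s2 : ℝ) / 2) / 2 ∧
      logisticNormal (2 * (s2 : ℝ)) s2 =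
        Real.exp (-(3 * (s2 : ℝ)) / 2) * (1 - Real.exp (-(s2 : ℝ) / 2) / 2) := by
  have hv : s2 ≠ 0 := hs2.ne'
  have hall : ∀ t : ℕ, logisticNormal (t * (s2 : ℝ)) s2 = pirjolSeq (s2 : ℝ) t := by
    intro t
    induction t with
    | zero => simpa [pirjolSeq] using logisticNormal_zero s2 hv
    | succ t ih =>
        have : ((t + 1 : ℕ) : ℝ) * (s2 : ℝ) = (t : ℝ) * (s2 : ℝ) + (s2 : ℝ) := by
          push_cast; ring
        rw [this, logisticNormal_rec _ hv, ih, pirjolSeq]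
  refine ⟨hall, ?_, ?_⟩
  · have h1 := hall 1
    norm_num [pirjolSeq] at h1
    rw [show (-(s2:ℝ)/2) = -((s2:ℝ)/2) by ring]
    linarith [h1]
  · have h2 := hall 2
    norm_num [pirjolSeq] at h2
    rw [h2]
    rw [show -((s2:ℝ)) - (s2:ℝ)/2 = -(3*(s2:ℝ))/2 by ring,
      show (-(s2:ℝ)/2) = -((s2:ℝ)/2) by ring]
    ring
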